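/- If f, g : Z_p → Z_p are arithmetic differential operators of orders m and n respectively, then the composition f ∘ g is an arithmetic differential operator of order m + n. -/

import Mathlib

open Filter

variable {p : ℕ} [Fact p.Prime]

/-- A multivariate power series over `ℤ_[p]` is restricted if its coefficients
tend to `0` `p`-adically as the total degree of the index tends to infinity
(equivalently, along the cofinite filter on indices). -/
def MvRestricted {k : ℕ} (F : MvPowerSeries (Fin k) ℤ_[p]) : Prop :=
  Tendsto (fun α : Fin k →₀ ℕ => MvPowerSeries.coeff α F) cofinite (nhds 0)

/-- Evaluation of a (restricted) multivariate power series at a tuple of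
`p`-adic integers. -/
noncomputable def mvEval {k : ℕ} (F : MvPowerSeries (Fin k) ℤ_[p])
    (x : Fin k → ℤ_[p]) : ℤ_[p] :=
  ∑' α : Fin k →₀ ℕ, MvPowerSeries.coeff α F * ∏ i : Fin k, x i ^ α i

/-- A one-variable power series over `ℤ_[p]` is restricted if its
coefficients tend to `0` `p`-adically. -/
def PRestricted (F : PowerSeries ℤ_[p]) : Prop :=
  Tendsto (fun n : ℕ => PowerSeries.coeff n F) atTop (nhds 0)

/-- Evaluation of a (restricted) one-variable power series at a `p`-adic
integer. -/
noncomputable def pEval (F : PowerSeries ℤ_[p]) (u : ℤ_[p]) : ℤ_[p] :=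
  ∑' n : ℕ, PowerSeries.coeff n F * u ^ n

/-- `f` is an arithmetic differential operator of order `m` (relative to the
Fermat quotient operator `δ`) if it is given by a restricted power series in
`a, δa, ..., δ^m a`. -/
def IsADO (δ : ℤ_[p] → ℤ_[p]) (m : ℕ) (f : ℤ_[p] → ℤ_[p]) : Prop :=
  ∃ F : MvPowerSeries (Fin (m + 1)) ℤ_[p], MvRestricted F ∧
    ∀ a : ℤ_[p], f a = mvEval F (fun i : Fin (m + 1) => δ^[(i : ℕ)] a)

/-- `f` is analytic of level `m` if on every disc `a + p^m ℤ_[p]` it is given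
by a restricted power series in `u`, where `x = a + p^m u`. -/
def IsAnalyticLevel (m : ℕ) (f : ℤ_[p] → ℤ_[p]) : Prop :=
  ∀ a : ℤ_[p], ∃ F : PowerSeries ℤ_[p], PRestricted F ∧
    ∀ u : ℤ_[p], f (a + (p : ℤ_[p]) ^ m * u) = pEval F u

namespace AdoComp

variable {p : ℕ} [Fact p.Prime]

noncomputable def jm (δ : ℤ_[p] → ℤ_[p]) {k : ℕ} (α : Fin (k+1) →₀ ℕ) (a : ℤ_[p]) : ℤ_[p] :=
  ∏ j : Fin (k+1), (δ^[(j:ℕ)] a) ^ α j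

lemma jm_norm_le (δ : ℤ_[p] → ℤ_[p]) {k : ℕ} (α : Fin (k+1) →₀ ℕ) (a : ℤ_[p]) :
    ‖jm δ α a‖ ≤ 1 := PadicInt.norm_le_one _

lemma tendsto_cof_iff {ι : Type*} (c : ι → ℤ_[p]) :
    Tendsto c cofinite (nhds 0) ↔ ∀ ε > (0:ℝ), {i | ε ≤ ‖c i‖}.Finite := by
  rw [NormedAddCommGroup.tendsto_nhds_zero]
  refine forall_congr' fun ε => forall_congr' fun hε => ?_
  rw [eventually_cofinite]
  simp [not_lt]

lemma summable_dom {ι : Type*} {c x : ι → ℤ_[p]} (hc : Tendsto c cofinite (nhds 0))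
    (hx : ∀ i, ‖x i‖ ≤ ‖c i‖) : Summable x :=
  NonarchimedeanAddGroup.summable_of_tendsto_cofinite_zero
    (squeeze_zero_norm hx (by simpa using hc.norm))

lemma norm_mul_le_left {c m : ℤ_[p]} (hm : ‖m‖ ≤ 1) : ‖c * m‖ ≤ ‖c‖ :=
  (norm_mul_le _ _).trans (mul_le_of_le_one_right (norm_nonneg _) hm)

/-- `h` has a good (countable, restricted) representation as a series in the
`δ`-jets of order `≤ k`. -/
def GoodRep (δ : ℤ_[p] → ℤ_[p]) (k : ℕ) (h : ℤ_[p] → ℤ_[p]) : Prop :=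
  ∃ (ι : Type) (_ : Countable ι) (c : ι → ℤ_[p]) (μ : ι → (Fin (k+1) →₀ ℕ)),
    Tendsto c cofinite (nhds 0) ∧ ∀ a, HasSum (fun i => c i * jm δ (μ i) a) (h a)

variable {δ : ℤ_[p] → ℤ_[p]}

lemma jm_add {k : ℕ} (α β : Fin (k+1) →₀ ℕ) (a : ℤ_[p]) :
    jm δ (α + β) a = jm δ α a * jm δ β a := by
  simp only [jm, Finsupp.add_apply, pow_add, Finset.prod_mul_distrib]

lemma jm_single {k : ℕ} (j : Fin (k+1)) (t : ℕ) (a : ℤ_[p]) :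
    jm δ (Finsupp.single j t) a = (δ^[(j:ℕ)] a) ^ t := by
  rw [jm, Finset.prod_eq_single j]
  · simp
  · intro b _ hb; simp [Finsupp.single_apply, Ne.symm hb]
  · simp

lemma GoodRep.mono {k k' : ℕ} (hkk : k ≤ k') {h : ℤ_[p] → ℤ_[p]}
    (hh : GoodRep δ k h) : GoodRep δ k' h := by
  obtain ⟨ι, hι, c, μ, hc, hs⟩ := hh
  set e : Fin (k+1) ↪ Fin (k'+1) := ⟨Fin.castLE (by omega), Fin.castLE_injective _⟩ with he
  refine ⟨ι, hι, c, fun i => (μ i).embDomain e, hc, fun a => ?_⟩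
  convert hs a using 2 with i
  congr 1
  rw [jm, jm]
  rw [← Finset.prod_subset (Finset.subset_univ (Finset.univ.map e))]
  · rw [Finset.prod_map]
    refine Finset.prod_congr rfl fun j _ => ?_
    rw [Finsupp.embDomain_apply_self]
    rfl
  · intro x _ hx
    have hx0 : (Finsupp.embDomain e (μ i)) x = 0 := by
      apply Finsupp.embDomain_notin_range
      intro hmem
      rcases hmem with ⟨y, hy⟩
      exact hx (Finset.mem_map.2 ⟨y, Finset.mem_univ _, hy⟩)
    rw [hx0, pow_zero]

lemma GoodRep.monomial {k : ℕ} (β : Fin (k+1) →₀ ℕ) :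
    GoodRep δ k (fun a => jm δ β a) := by
  refine ⟨PUnit, inferInstance, fun _ => 1, fun _ => β, ?_, fun a => ?_⟩
  · exact (tendsto_cof_iff _).2 fun ε hε => Set.toFinite _
  · simpa using hasSum_single (f := fun _ : PUnit => (1:ℤ_[p]) * jm δ β a) PUnit.unit
      (fun b hb => absurd rfl hb)

lemma GoodRep.const {k : ℕ} (r : ℤ_[p]) : GoodRep δ k (fun _ => r) := by
  refine ⟨PUnit, inferInstance, fun _ => r, fun _ => 0, ?_, fun a => ?_⟩
  · exact (tendsto_cof_iff _).2 fun ε hε => Set.toFinite _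
  · have : r * jm δ (0 : Fin (k+1) →₀ ℕ) a = r := by simp [jm]
    simpa [this] using hasSum_single (f := fun _ : PUnit => r * jm δ (0 : Fin (k+1) →₀ ℕ) a)
      PUnit.unit (fun b hb => absurd rfl hb)

lemma GoodRep.hasSum_choice {k : ℕ} {h : ℤ_[p] → ℤ_[p]} (hh : GoodRep δ k h) : True := trivial

lemma GoodRep.mul {k : ℕ} {h₁ h₂ : ℤ_[p] → ℤ_[p]} (H₁ : GoodRep δ k h₁)
    (H₂ : GoodRep δ k h₂) : GoodRep δ k (fun a => h₁ a * h₂ a) := by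
  obtain ⟨ι₁, hι₁, c₁, μ₁, hc₁, hs₁⟩ := H₁
  obtain ⟨ι₂, hι₂, c₂, μ₂, hc₂, hs₂⟩ := H₂
  have hcnt : Countable (ι₁ × ι₂) := inferInstance
  refine ⟨ι₁ × ι₂, hcnt, fun i => c₁ i.1 * c₂ i.2, fun i => μ₁ i.1 + μ₂ i.2, ?_, fun a => ?_⟩
  · rw [tendsto_cof_iff]
    intro ε hε
    have h1 := (tendsto_cof_iff c₁).1 hc₁ ε hε
    have h2 := (tendsto_cof_iff c₂).1 hc₂ ε hε
    refine ((h1.prod h2).subset ?_)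
    rintro ⟨i₁, i₂⟩ hi
    have hle : ε ≤ ‖c₁ i₁ * c₂ i₂‖ := hi
    constructor
    · exact le_trans hle (norm_mul_le_left (PadicInt.norm_le_one _))
    · exact le_trans hle (by
        calc ‖c₁ i₁ * c₂ i₂‖ = ‖c₂ i₂ * c₁ i₁‖ := by rw [mul_comm]
        _ ≤ ‖c₂ i₂‖ := norm_mul_le_left (PadicInt.norm_le_one _))
  · have hc' : Tendsto (fun i : ι₁ × ι₂ => c₁ i.1 * c₂ i.2) cofinite (nhds 0) := by
      rw [tendsto_cof_iff]
      intro ε hε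
      have h1 := (tendsto_cof_iff c₁).1 hc₁ ε hε
      have h2 := (tendsto_cof_iff c₂).1 hc₂ ε hε
      refine ((h1.prod h2).subset ?_)
      rintro ⟨i₁, i₂⟩ hi
      have hle : ε ≤ ‖c₁ i₁ * c₂ i₂‖ := hi
      exact ⟨le_trans hle (norm_mul_le_left (PadicInt.norm_le_one _)),
        le_trans hle (by
          calc ‖c₁ i₁ * c₂ i₂‖ = ‖c₂ i₂ * c₁ i₁‖ := by rw [mul_comm]
          _ ≤ ‖c₂ i₂‖ := norm_mul_le_left (PadicInt.norm_le_one _))⟩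
    have hsummable : Summable (fun i : ι₁ × ι₂ =>
        (c₁ i.1 * c₂ i.2) * jm δ (μ₁ i.1 + μ₂ i.2) a) :=
      summable_dom hc' (fun i => norm_mul_le_left (jm_norm_le _ _ _))
    obtain ⟨L, hL⟩ := hsummable
    have heq : ∀ i : ι₁ × ι₂,
        (c₁ i.1 * jm δ (μ₁ i.1) a) * (c₂ i.2 * jm δ (μ₂ i.2) a)
          = (c₁ i.1 * c₂ i.2) * jm δ (μ₁ i.1 + μ₂ i.2) a := by
      intro i; rw [jm_add]; ring
    have := (hs₁ a).mul_eq (hs₂ a) (by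
      simpa only [heq] using hL)
    show HasSum _ (h₁ a * h₂ a)
    rw [this]
    exact hL

lemma GoodRep.add {k : ℕ} {h₁ h₂ : ℤ_[p] → ℤ_[p]} (H₁ : GoodRep δ k h₁)
    (H₂ : GoodRep δ k h₂) : GoodRep δ k (fun a => h₁ a + h₂ a) := by
  obtain ⟨ι₁, hι₁, c₁, μ₁, hc₁, hs₁⟩ := H₁
  obtain ⟨ι₂, hι₂, c₂, μ₂, hc₂, hs₂⟩ := H₂
  refine ⟨ι₁ ⊕ ι₂, inferInstance, Sum.elim c₁ c₂, Sum.elim μ₁ μ₂, ?_, fun a => ?_⟩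
  · rw [tendsto_cof_iff]
    intro ε hε
    have h1 := (tendsto_cof_iff c₁).1 hc₁ ε hε
    have h2 := (tendsto_cof_iff c₂).1 hc₂ ε hε
    refine Set.Finite.subset ((h1.image Sum.inl).union (h2.image Sum.inr)) ?_
    rintro (i | i) hi
    · exact Or.inl ⟨i, hi, rfl⟩
    · exact Or.inr ⟨i, hi, rfl⟩
  · set f : ι₁ ⊕ ι₂ → ℤ_[p] := fun x => Sum.elim c₁ c₂ x * jm δ (Sum.elim μ₁ μ₂ x) a with hf
    have h1 : HasSum (f ∘ (↑) : Set.range (Sum.inl : ι₁ → ι₁ ⊕ ι₂) → ℤ_[p]) (h₁ a) := by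
      rw [← (Equiv.ofInjective _
        (Sum.inl_injective : Function.Injective (Sum.inl : ι₁ → ι₁ ⊕ ι₂))).hasSum_iff]
      exact hs₁ a
    have h2 : HasSum (f ∘ (↑) : Set.range (Sum.inr : ι₂ → ι₁ ⊕ ι₂) → ℤ_[p]) (h₂ a) := by
      rw [← (Equiv.ofInjective _
        (Sum.inr_injective : Function.Injective (Sum.inr : ι₂ → ι₁ ⊕ ι₂))).hasSum_iff]
      exact hs₂ a
    exact h1.add_isCompl Set.isCompl_range_inl_range_inr h2

lemma GoodRep.constMul {k : ℕ} (r : ℤ_[p]) {h : ℤ_[p] → ℤ_[p]} (H : GoodRep δ k h) :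
    GoodRep δ k (fun a => r * h a) := (GoodRep.const r).mul H

lemma GoodRep.pow {k : ℕ} {h : ℤ_[p] → ℤ_[p]} (H : GoodRep δ k h) (r : ℕ) :
    GoodRep δ k (fun a => (h a) ^ r) := by
  induction r with
  | zero => simpa using GoodRep.const (δ := δ) (k := k) 1
  | succ r ih =>
      have := ih.mul H
      simpa [pow_succ] using this

lemma GoodRep.finsetSum {k : ℕ} {σ : Type*} (s : Finset σ) (h : σ → ℤ_[p] → ℤ_[p])
    (H : ∀ x ∈ s, GoodRep δ k (h x)) : GoodRep δ k (fun a => ∑ x ∈ s, h x a) := by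
  classical
  induction s using Finset.induction_on with
  | empty => simpa using GoodRep.const (δ := δ) (k := k) 0
  | insert x s' hx ih =>
      have h1 : GoodRep δ k (h x) := H x (Finset.mem_insert_self _ _)
      have h2 := ih fun y hy => H y (Finset.mem_insert_of_mem hy)
      have := h1.add h2
      simpa [Finset.sum_insert hx] using this

lemma GoodRep.iter {k : ℕ} {t : ℕ} (ht : t ≤ k) : GoodRep δ k (fun a => δ^[t] a) := by
  have := GoodRep.monomial (δ := δ) (k := k) (Finsupp.single ⟨t, by omega⟩ 1)
  simpa [jm_single] using this

lemma GoodRep.tsum {k : ℕ} {κ : Type} [Countable κ] (c : κ → ℤ_[p])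
    (hc : Tendsto c cofinite (nhds 0)) (h : κ → ℤ_[p] → ℤ_[p])
    (H : ∀ x, GoodRep δ k (h x)) :
    GoodRep δ k (fun a => ∑' x, c x * h x a) := by
  classical
  choose ι hι d μ hd hs using H
  haveI : ∀ x, Countable (ι x) := hι
  have hc' : Tendsto (fun s : Σ x : κ, ι x => c s.1 * d s.1 s.2) cofinite (nhds 0) := by
    rw [tendsto_cof_iff]
    intro ε hε
    have hT := (tendsto_cof_iff c).1 hc ε hε
    have hS : ∀ x, {i | ε ≤ ‖d x i‖}.Finite := fun x => (tendsto_cof_iff (d x)).1 (hd x) ε hε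
    refine Set.Finite.subset (hT.biUnion (fun x _ => ((hS x).image (Sigma.mk x)))) ?_
    rintro ⟨x, i⟩ hxi
    have hle : ε ≤ ‖c x * d x i‖ := hxi
    have h1 : ε ≤ ‖c x‖ := le_trans hle (norm_mul_le_left (PadicInt.norm_le_one _))
    have h2 : ε ≤ ‖d x i‖ := le_trans hle (by
      calc ‖c x * d x i‖ = ‖d x i * c x‖ := by rw [mul_comm]
      _ ≤ ‖d x i‖ := norm_mul_le_left (PadicInt.norm_le_one _))
    exact Set.mem_biUnion h1 ⟨i, h2, rfl⟩
  refine ⟨Σ x : κ, ι x, inferInstance, fun s => c s.1 * d s.1 s.2,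
    fun s => μ s.1 s.2, hc', fun a => ?_⟩
  have hsummable : Summable (fun s : Σ x : κ, ι x =>
      c s.1 * d s.1 s.2 * jm δ (μ s.1 s.2) a) :=
    summable_dom hc' (fun s => norm_mul_le_left (jm_norm_le _ _ _))
  have hfib : ∀ x : κ, HasSum (fun i : ι x => c x * d x i * jm δ (μ x i) a) (c x * h x a) := by
    intro x
    have := (hs x a).mul_left (c x)
    simpa [mul_assoc] using this
  have houter := hsummable.hasSum.sigma hfib
  rw [show (fun a => ∑' x, c x * h x a) a = ∑' s : Σ x : κ, ι x,
      c s.1 * d s.1 s.2 * jm δ (μ s.1 s.2) a from houter.tsum_eq]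
  exact hsummable.hasSum

lemma GoodRep.natRep {k : ℕ} {h : ℤ_[p] → ℤ_[p]} (H : GoodRep δ k h) :
    ∃ (c : ℕ → ℤ_[p]) (μ : ℕ → (Fin (k+1) →₀ ℕ)),
      Tendsto c cofinite (nhds 0) ∧ ∀ a, HasSum (fun i => c i * jm δ (μ i) a) (h a) := by
  classical
  obtain ⟨ι, hι, c, μ, hc, hs⟩ := H
  haveI := hι
  haveI : Encodable ι := Encodable.ofCountable ι
  have henc : Function.Injective (Encodable.encode : ι → ℕ) := Encodable.encode_injective
  refine ⟨Function.extend Encodable.encode c 0, Function.extend Encodable.encode μ 0, ?_, ?_⟩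
  · rw [tendsto_cof_iff]
    intro ε hε
    refine Set.Finite.subset (((tendsto_cof_iff c).1 hc ε hε).image Encodable.encode) ?_
    intro n hn
    by_cases hr : ∃ i : ι, Encodable.encode i = n
    · obtain ⟨i, rfl⟩ := hr
      rw [Set.mem_setOf_eq, henc.extend_apply] at hn
      exact ⟨i, hn, rfl⟩
    · rw [Set.mem_setOf_eq, Function.extend_apply' _ _ _ hr] at hn
      exact absurd (le_trans hn (by simp)) (not_le.2 hε)
  · intro a
    have key : (fun n => Function.extend Encodable.encode c 0 n *
        jm δ (Function.extend Encodable.encode μ 0 n) a)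
        = Function.extend Encodable.encode (fun i => c i * jm δ (μ i) a) 0 := by
      funext n
      by_cases hr : ∃ i : ι, Encodable.encode i = n
      · obtain ⟨i, rfl⟩ := hr
        rw [henc.extend_apply, henc.extend_apply, henc.extend_apply]
      · rw [Function.extend_apply' _ _ _ hr, Function.extend_apply' _ _ _ hr,
            Function.extend_apply' _ _ _ hr]
        simp
    rw [key]
    exact (hasSum_extend_zero henc).2 (hs a)

lemma GoodRep.finsetProd {k : ℕ} {σ : Type*} (s : Finset σ) (h : σ → ℤ_[p] → ℤ_[p])
    (H : ∀ x ∈ s, GoodRep δ k (h x)) : GoodRep δ k (fun a => ∏ x ∈ s, h x a) := by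
  classical
  induction s using Finset.induction_on with
  | empty => simpa using GoodRep.const (δ := δ) (k := k) 1
  | insert x s' hx ih =>
      have h1 : GoodRep δ k (h x) := H x (Finset.mem_insert_self _ _)
      have h2 := ih fun y hy => H y (Finset.mem_insert_of_mem hy)
      have := h1.mul h2
      simpa [Finset.prod_insert hx] using this

lemma prod_pow_single_add {k : ℕ} (u : Fin (k+1) → ℤ_[p]) (j : Fin (k+1)) (b : ℕ)
    (f : Fin (k+1) →₀ ℕ) :
    ∏ l : Fin (k+1), u l ^ ((Finsupp.single j b + f) l) = u j ^ b * ∏ l : Fin (k+1), u l ^ f l := by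
  simp only [Finsupp.add_apply, pow_add, Finset.prod_mul_distrib]
  congr 1
  rw [Finset.prod_eq_single j]
  · simp
  · intro l _ hl; simp [Finsupp.single_apply, Ne.symm hl]
  · simp

lemma jm_sub_pow (hδ : ∀ x : ℤ_[p], (p : ℤ_[p]) * δ x = x - x ^ p) {k : ℕ}
    (α : Fin (k+1) →₀ ℕ) :
    ∃ R : ℤ_[p] → ℤ_[p], GoodRep δ (k+1) R ∧
      ∀ a, jm δ α a - (∏ j : Fin (k+1), ((δ^[(j:ℕ)] a) ^ p) ^ α j) = (p : ℤ_[p]) * R a := by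
  induction α using Finsupp.induction with
  | zero => exact ⟨fun _ => 0, GoodRep.const 0, by simp [jm]⟩
  | single_add j b f hj hb ih =>
    obtain ⟨R, hR, hRe⟩ := ih
    have hjk : ((j : ℕ)) ≤ k + 1 := by omega
    have hjk1 : ((j : ℕ)) + 1 ≤ k + 1 := by
      have := j.isLt; omega
    refine ⟨fun x => (δ^[(j:ℕ)] x) ^ b * R x +
      δ^[(j:ℕ)+1] x * ((∑ i ∈ Finset.range b,
        (δ^[(j:ℕ)] x) ^ i * ((δ^[(j:ℕ)] x) ^ p) ^ (b - 1 - i)) *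
        ∏ l : Fin (k+1), ((δ^[(l:ℕ)] x) ^ p) ^ f l), ?_, ?_⟩
    · apply GoodRep.add
      · exact (GoodRep.pow (GoodRep.iter hjk) b).mul hR
      · refine (GoodRep.iter hjk1).mul ?_
        refine GoodRep.mul ?_ ?_
        · refine GoodRep.finsetSum _ _ fun i _ => ?_
          exact (GoodRep.pow (GoodRep.iter hjk) i).mul
            (GoodRep.pow (GoodRep.pow (GoodRep.iter hjk) p) (b - 1 - i))
        · refine GoodRep.finsetProd _ _ fun l _ => ?_
          exact GoodRep.pow (GoodRep.pow (GoodRep.iter (by omega : ((l:ℕ)) ≤ k + 1)) p) (f l)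
    · intro a
      set wj := δ^[(j:ℕ)] a with hwj
      set A := jm δ f a with hA
      set B := ∏ l : Fin (k+1), ((δ^[(l:ℕ)] a) ^ p) ^ f l with hB
      have hsplit1 : jm δ (Finsupp.single j b + f) a = wj ^ b * A :=
        prod_pow_single_add (fun l => δ^[(l:ℕ)] a) j b f
      have hsplit2 : (∏ l : Fin (k+1), ((δ^[(l:ℕ)] a) ^ p) ^ ((Finsupp.single j b + f) l))
          = (wj ^ p) ^ b * B := prod_pow_single_add (fun l => (δ^[(l:ℕ)] a) ^ p) j b f
      rw [hsplit1, hsplit2]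
      have h1 : wj - wj ^ p = (p : ℤ_[p]) * δ^[(j:ℕ)+1] a := by
        rw [Function.iterate_succ_apply']
        exact (hδ wj).symm
      have h2 : wj ^ b - (wj ^ p) ^ b
          = (∑ i ∈ Finset.range b, wj ^ i * (wj ^ p) ^ (b - 1 - i)) * (wj - wj ^ p) :=
        (geom_sum₂_mul wj (wj ^ p) b).symm
      have hAB : A - B = (p : ℤ_[p]) * R a := hRe a
      have expand : wj ^ b * A - (wj ^ p) ^ b * B
          = wj ^ b * (A - B) + (wj ^ b - (wj ^ p) ^ b) * B := by ring
      rw [expand, hAB, h2, h1]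
      ring

lemma pow_add_prime (s x : ℤ_[p]) :
    (s + x) ^ p = s ^ p + x ^ p + (p : ℤ_[p]) * ∑ j ∈ Finset.Ioo 0 p,
      ((p.choose j / p : ℕ) : ℤ_[p]) * s ^ j * x ^ (p - j) := by
  have hp : p.Prime := Fact.out
  have hp0 : 0 < p := hp.pos
  rw [add_pow]
  have hrange : Finset.range (p + 1) = insert p (insert 0 (Finset.Ioo 0 p)) := by
    ext j
    simp only [Finset.mem_range, Finset.mem_insert, Finset.mem_Ioo]
    omega
  rw [hrange]
  rw [Finset.sum_insert (by simp; omega), Finset.sum_insert (by simp)]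
  have h1 : s ^ p * x ^ (p - p) * (p.choose p : ℤ_[p]) = s ^ p := by simp
  have h2 : s ^ 0 * x ^ (p - 0) * (p.choose 0 : ℤ_[p]) = x ^ p := by simp
  have hmid : ∑ j ∈ Finset.Ioo 0 p, s ^ j * x ^ (p - j) * (p.choose j : ℤ_[p])
      = (p : ℤ_[p]) * ∑ j ∈ Finset.Ioo 0 p,
        ((p.choose j / p : ℕ) : ℤ_[p]) * s ^ j * x ^ (p - j) := by
    rw [Finset.mul_sum]
    refine Finset.sum_congr rfl fun j hj => ?_
    rw [Finset.mem_Ioo] at hj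
    have hdvd : p ∣ p.choose j := hp.dvd_choose_self (by omega) hj.2
    have hc : ((p.choose j : ℕ) : ℤ_[p]) = (p : ℤ_[p]) * ((p.choose j / p : ℕ) : ℤ_[p]) := by
      rw [← Nat.cast_mul, Nat.mul_div_cancel' hdvd]
    rw [hc]
    ring
  rw [h1, h2, hmid]
  ring

lemma norm_delta_le (hδ : ∀ x : ℤ_[p], (p : ℤ_[p]) * δ x = x - x ^ p) (x : ℤ_[p]) :
    ‖δ x‖ ≤ (p : ℝ) * ‖x‖ := by
  have hp : p.Prime := Fact.out
  have hp' : (0:ℝ) < p := by exact_mod_cast hp.pos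
  have h1 : ‖(p : ℤ_[p]) * δ x‖ = (p : ℝ)⁻¹ * ‖δ x‖ := by
    rw [norm_mul, PadicInt.norm_p]
  have h2 : ‖x - x ^ p‖ ≤ ‖x‖ := by
    rw [sub_eq_add_neg]
    refine (IsUltrametricDist.norm_add_le_max _ _).trans ?_
    refine max_le le_rfl ?_
    rw [norm_neg]
    calc ‖x ^ p‖ = ‖x‖ ^ p := norm_pow x p
    _ ≤ ‖x‖ ^ 1 := pow_le_pow_of_le_one (norm_nonneg _) (PadicInt.norm_le_one _) hp.one_lt.le
    _ = ‖x‖ := pow_one _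
  have h0 : ‖x - x ^ p‖ = (p : ℝ)⁻¹ * ‖δ x‖ := by rw [← hδ x, h1]
  have h3 : (p:ℝ)⁻¹ * ‖δ x‖ ≤ ‖x‖ := h0 ▸ h2
  calc ‖δ x‖ = (p:ℝ) * ((p:ℝ)⁻¹ * ‖δ x‖) := by field_simp
  _ ≤ (p:ℝ) * ‖x‖ := mul_le_mul_of_nonneg_left h3 hp'.le

lemma GoodRep.congr {k : ℕ} {h h' : ℤ_[p] → ℤ_[p]} (H : GoodRep δ k h)
    (he : ∀ a, h a = h' a) : GoodRep δ k h' := by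
  obtain ⟨ι, hι, c, μ, hc, hs⟩ := H
  exact ⟨ι, hι, c, μ, hc, fun a => (he a) ▸ hs a⟩

lemma GoodRep.delta (hδ : ∀ x : ℤ_[p], (p : ℤ_[p]) * δ x = x - x ^ p) {k : ℕ}
    {h : ℤ_[p] → ℤ_[p]} (H : GoodRep δ k h) : GoodRep δ (k+1) (fun a => δ (h a)) := by
  classical
  have hp : p.Prime := Fact.out
  have hpz : (p : ℤ_[p]) ≠ 0 := by
    exact_mod_cast (Nat.cast_ne_zero (R := ℤ_[p])).2 hp.ne_zero
  obtain ⟨c, μ, hc, hs⟩ := H.natRep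
  -- the terms
  set x : ℕ → ℤ_[p] → ℤ_[p] := fun i a => c i * jm δ (μ i) a with hx
  set S : ℕ → ℤ_[p] → ℤ_[p] := fun N a => ∑ l ∈ Finset.range N, x l a with hS
  set D : ℕ → ℤ_[p] → ℤ_[p] := fun i a => ∑ j ∈ Finset.Ioo 0 p,
    ((p.choose j / p : ℕ) : ℤ_[p]) * ((S i a) ^ j *
      ((c i) ^ (p - j - 1) * (jm δ (μ i) a) ^ (p - j))) with hD
  have hSgood : ∀ N, GoodRep δ k (S N) := by
    intro N
    exact GoodRep.finsetSum _ _ fun l _ => (GoodRep.const (c l)).mul (GoodRep.monomial (μ l))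
  have hDgood : ∀ i, GoodRep δ k (D i) := by
    intro i
    refine GoodRep.finsetSum _ _ fun j _ => ?_
    exact (GoodRep.const _).mul (((hSgood i).pow j).mul
      ((GoodRep.const _).mul ((GoodRep.monomial (μ i)).pow (p - j))))
  -- telescoping identity
  have hxb : ∀ i a, ‖x i a‖ ≤ ‖c i‖ := fun i a => norm_mul_le_left (jm_norm_le _ _ _)
  have hcD : ∀ i a, ∑ j ∈ Finset.Ioo 0 p,
      ((p.choose j / p : ℕ) : ℤ_[p]) * (S i a) ^ j * (x i a) ^ (p - j) = c i * D i a := by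
    intro i a
    rw [hD]
    simp only []
    rw [Finset.mul_sum]
    refine Finset.sum_congr rfl fun j hj => ?_
    rw [Finset.mem_Ioo] at hj
    have hcc : c i * (c i) ^ (p - j - 1) = (c i) ^ (p - j) := by
      rw [← pow_succ']
      congr 1
      omega
    calc ((p.choose j / p : ℕ) : ℤ_[p]) * (S i a) ^ j * (x i a) ^ (p - j)
        = ((p.choose j / p : ℕ) : ℤ_[p]) * (S i a) ^ j *
            ((c i) ^ (p - j) * (jm δ (μ i) a) ^ (p - j)) := by rw [hx]; rw [mul_pow]
      _ = c i * (((p.choose j / p : ℕ) : ℤ_[p]) * ((S i a) ^ j *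
            ((c i) ^ (p - j - 1) * (jm δ (μ i) a) ^ (p - j)))) := by rw [← hcc]; ring
  have hrec : ∀ N a, (S N a) ^ p
      = ∑ i ∈ Finset.range N, ((x i a) ^ p + (p : ℤ_[p]) * (c i * D i a)) := by
    intro N a
    induction N with
    | zero => simp [hS, zero_pow hp.ne_zero]
    | succ N ih =>
        have hSs : S (N+1) a = S N a + x N a := by rw [hS]; exact Finset.sum_range_succ _ _
        rw [hSs, pow_add_prime, ih, Finset.sum_range_succ, ← hcD N a]
        ring
  -- choose R via jm_sub_pow
  have hjs := fun α : Fin (k+1) →₀ ℕ => jm_sub_pow (δ := δ) hδ (k := k) α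
  choose R hRgood hReq using hjs
  set P : ℕ → ℤ_[p] → ℤ_[p] := fun i a => ∏ l : Fin (k+1), ((δ^[(l:ℕ)] a) ^ p) ^ (μ i l)
    with hP
  have hPgood : ∀ i, GoodRep δ (k+1) (P i) := by
    intro i
    refine GoodRep.finsetProd _ _ fun l _ => ?_
    exact ((GoodRep.iter (by have := l.isLt; omega : ((l:ℕ)) ≤ k + 1)).pow p).pow (μ i l)
  have hdc : Tendsto (fun i => δ (c i)) cofinite (nhds 0) := by
    rw [tendsto_cof_iff]
    intro ε hε
    have hp' : (0:ℝ) < p := by exact_mod_cast hp.pos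
    refine Set.Finite.subset ((tendsto_cof_iff c).1 hc (ε / p) (by positivity)) ?_
    intro i hi
    rw [Set.mem_setOf_eq] at hi ⊢
    have hnd := norm_delta_le hδ (c i)
    rw [div_le_iff₀ hp']
    nlinarith
  have hterm : ∀ i a, x i a - (x i a) ^ p
      = (p : ℤ_[p]) * (c i * R (μ i) a + δ (c i) * P i a) := by
    intro i a
    have h1 : (jm δ (μ i) a) ^ p = P i a := by
      rw [hP, jm]
      simp only []
      rw [← Finset.prod_pow]
      refine Finset.prod_congr rfl fun l _ => ?_
      rw [← pow_mul, ← pow_mul, mul_comm]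
    have h2 : jm δ (μ i) a - P i a = (p:ℤ_[p]) * R (μ i) a := by
      have := hReq (μ i) a
      rw [hP]
      exact this
    have h3 : c i - (c i)^p = (p:ℤ_[p]) * δ (c i) := (hδ (c i)).symm
    calc x i a - (x i a)^p
        = c i * jm δ (μ i) a - (c i)^p * (jm δ (μ i) a)^p := by rw [hx]; rw [mul_pow]
      _ = c i * (jm δ (μ i) a - P i a) + (c i - (c i)^p) * P i a := by rw [h1]; ring
      _ = _ := by rw [h2, h3]; ring
  have key : ∀ a, (p:ℤ_[p]) * δ (h a) = (p:ℤ_[p]) *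
      ((∑' i, c i * R (μ i) a) + (∑' i, δ (c i) * P i a) + (-1) * (∑' i, c i * D i a)) := by
    intro a
    have hsum_x : HasSum (fun i => x i a) (h a) := hs a
    have hsum_xp : Summable (fun i => (x i a)^p) := by
      refine summable_dom hc (fun i => ?_)
      calc ‖(x i a)^p‖ = ‖x i a‖^p := norm_pow _ _
        _ ≤ ‖x i a‖^1 := pow_le_pow_of_le_one (norm_nonneg _)
            ((hxb i a).trans (PadicInt.norm_le_one _)) hp.one_lt.le
        _ = ‖x i a‖ := pow_one _
        _ ≤ ‖c i‖ := hxb i a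
    have hsum_cD : Summable (fun i => c i * D i a) :=
      summable_dom hc fun i => norm_mul_le_left (PadicInt.norm_le_one _)
    have hsum_cR : Summable (fun i => c i * R (μ i) a) :=
      summable_dom hc fun i => norm_mul_le_left (PadicInt.norm_le_one _)
    have hsum_dP : Summable (fun i => δ (c i) * P i a) :=
      summable_dom hdc fun i => norm_mul_le_left (PadicInt.norm_le_one _)
    have hlim1 : Tendsto (fun N => (S N a)^p) atTop (nhds ((h a)^p)) :=
      (hsum_x.tendsto_sum_nat).pow p
    have hlim2 : Tendsto (fun N => ∑ i ∈ Finset.range N,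
        ((x i a)^p + (p:ℤ_[p]) * (c i * D i a))) atTop
        (nhds ((∑' i, (x i a)^p) + (p:ℤ_[p]) * (∑' i, c i * D i a))) := by
      have t1 := hsum_xp.hasSum.tendsto_sum_nat
      have t2 := (hsum_cD.hasSum.mul_left ((p:ℤ_[p]))).tendsto_sum_nat
      have := t1.add t2
      simpa [Finset.sum_add_distrib, Finset.mul_sum] using this
    have hEq : (h a)^p = (∑' i, (x i a)^p) + (p:ℤ_[p]) * (∑' i, c i * D i a) := by
      have hfn : (fun N => (S N a)^p) = fun N => ∑ i ∈ Finset.range N,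
          ((x i a)^p + (p:ℤ_[p]) * (c i * D i a)) := funext fun N => hrec N a
      rw [hfn] at hlim1
      exact tendsto_nhds_unique hlim1 hlim2
    have hsub : HasSum (fun i => x i a - (x i a)^p) (h a - (∑' i, (x i a)^p)) :=
      hsum_x.sub hsum_xp.hasSum
    have hsub2 : HasSum (fun i => (p:ℤ_[p]) * (c i * R (μ i) a + δ (c i) * P i a))
        ((p:ℤ_[p]) * ((∑' i, c i * R (μ i) a) + (∑' i, δ (c i) * P i a))) :=
      (hsum_cR.hasSum.add hsum_dP.hasSum).mul_left _
    have hsub3 : h a - (∑' i, (x i a)^p)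
        = (p:ℤ_[p]) * ((∑' i, c i * R (μ i) a) + (∑' i, δ (c i) * P i a)) := by
      refine HasSum.unique ?_ hsub2
      convert hsub using 1
      funext i
      exact (hterm i a).symm
    rw [hδ (h a), hEq]
    have expand : h a - ((∑' i, (x i a)^p) + (p:ℤ_[p]) * (∑' i, c i * D i a))
        = (h a - (∑' i, (x i a)^p)) - (p:ℤ_[p]) * (∑' i, c i * D i a) := by ring
    rw [expand, hsub3]
    ring
  have g1 : GoodRep δ (k+1) (fun a => ∑' i, c i * R (μ i) a) :=
    GoodRep.tsum c hc _ (fun i => hRgood (μ i))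
  have g2 : GoodRep δ (k+1) (fun a => ∑' i, δ (c i) * P i a) :=
    GoodRep.tsum (fun i => δ (c i)) hdc _ hPgood
  have g3 : GoodRep δ (k+1) (fun a => ∑' i, c i * D i a) :=
    GoodRep.tsum c hc _ (fun i => GoodRep.mono (Nat.le_succ k) (hDgood i))
  refine GoodRep.congr ((g1.add g2).add (g3.constMul (-1))) ?_
  intro a
  exact (mul_left_cancel₀ hpz (key a)).symm

lemma isADO_goodRep {m : ℕ} {f : ℤ_[p] → ℤ_[p]} (hf : IsADO δ m f) : GoodRep δ m f := by
  obtain ⟨F, hF, hFe⟩ := hf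
  refine ⟨Fin (m+1) →₀ ℕ, inferInstance, fun α => MvPowerSeries.coeff α F, id, hF,
    fun a => ?_⟩
  have hsummable : Summable (fun α : Fin (m+1) →₀ ℕ =>
      MvPowerSeries.coeff α F * jm δ α a) :=
    summable_dom hF (fun α => norm_mul_le_left (jm_norm_le _ _ _))
  have : f a = ∑' α : Fin (m+1) →₀ ℕ, MvPowerSeries.coeff α F * jm δ α a := hFe a
  rw [show f a = _ from this]
  exact hsummable.hasSum

lemma goodRep_isADO {m : ℕ} {f : ℤ_[p] → ℤ_[p]} (H : GoodRep δ m f) : IsADO δ m f := by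
  classical
  obtain ⟨ι, hι, c, μ, hc, hs⟩ := H
  haveI := hι
  set F : MvPowerSeries (Fin (m+1)) ℤ_[p] := fun β => ∑' i : {i : ι // μ i = β}, c i.1 with hF
  have hcoeff : ∀ β, MvPowerSeries.coeff β F = ∑' i : {i : ι // μ i = β}, c i.1 :=
    fun β => rfl
  have hfibsub : ∀ β : Fin (m+1) →₀ ℕ,
      Tendsto (fun i : {i : ι // μ i = β} => c i.1) cofinite (nhds 0) :=
    fun β => hc.comp Subtype.val_injective.tendsto_cofinite
  refine ⟨F, ?_, fun a => ?_⟩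
  · rw [MvRestricted, tendsto_cof_iff]
    intro ε hε
    refine Set.Finite.subset (((tendsto_cof_iff c).1 hc (ε/2) (by positivity)).image μ) ?_
    intro β hβ
    rw [Set.mem_setOf_eq] at hβ
    by_contra hnot
    have hsmall : ∀ i : {i : ι // μ i = β}, ‖c i.1‖ ≤ ε/2 := by
      rintro ⟨i, hi⟩
      by_contra hgt
      exact hnot ⟨i, le_of_lt (not_le.1 hgt), hi⟩
    have hbound : ‖MvPowerSeries.coeff β F‖ ≤ ε/2 := by
      rw [hcoeff]
      exact IsUltrametricDist.norm_tsum_le_of_forall_le_of_nonneg (by positivity) hsmall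
    linarith [hβ.trans hbound]
  · have hsummable : Summable (fun i => c i * jm δ (μ i) a) := (hs a).summable
    set e := Equiv.sigmaFiberEquiv μ with he
    have hgsum : HasSum (fun s : Σ β : Fin (m+1) →₀ ℕ, {i : ι // μ i = β} =>
        c s.2.1 * jm δ (μ s.2.1) a) (f a) := by
      rw [show (fun s : Σ β : Fin (m+1) →₀ ℕ, {i : ι // μ i = β} =>
          c s.2.1 * jm δ (μ s.2.1) a) = (fun i => c i * jm δ (μ i) a) ∘ e from rfl]
      exact e.hasSum_iff.2 (hs a)
    have hfib : ∀ β : Fin (m+1) →₀ ℕ,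
        HasSum (fun i : {i : ι // μ i = β} => c i.1 * jm δ (μ i.1) a)
          (MvPowerSeries.coeff β F * jm δ β a) := by
      intro β
      have h1 : (fun i : {i : ι // μ i = β} => c i.1 * jm δ (μ i.1) a)
          = fun i : {i : ι // μ i = β} => c i.1 * jm δ β a := by
        funext i
        rw [i.2]
      rw [h1, hcoeff]
      have hsumc : Summable (fun i : {i : ι // μ i = β} => c i.1) :=
        NonarchimedeanAddGroup.summable_of_tendsto_cofinite_zero (hfibsub β)
      exact hsumc.hasSum.mul_right _
    have hmain : HasSum (fun β : Fin (m+1) →₀ ℕ =>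
        MvPowerSeries.coeff β F * jm δ β a) (f a) := hgsum.sigma hfib
    exact hmain.tsum_eq.symm

end AdoComp

/-- The composition of arithmetic differential operators of orders `m` and `n`
is an arithmetic differential operator of order `m + n`. -/
theorem ado_comp (p : ℕ) [Fact p.Prime]
    (δ : ℤ_[p] → ℤ_[p]) (hδ : ∀ x : ℤ_[p], (p : ℤ_[p]) * δ x = x - x ^ p)
    (m n : ℕ) (f g : ℤ_[p] → ℤ_[p])
    (hf : IsADO δ m f) (hg : IsADO δ n g) :
    IsADO δ (m + n) (f ∘ g) := by
  obtain ⟨F, hF, hFe⟩ := hf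
  have hg' : AdoComp.GoodRep δ n g := AdoComp.isADO_goodRep hg
  have hiter : ∀ i : ℕ, AdoComp.GoodRep δ (n + i) (fun a => δ^[i] (g a)) := by
    intro i
    induction i with
    | zero => simpa using hg'
    | succ i ih =>
        have hstep := AdoComp.GoodRep.delta hδ ih
        refine hstep.congr fun a => ?_
        rw [Function.iterate_succ_apply']
  have hcomp : ∀ i : Fin (m+1), AdoComp.GoodRep δ (m + n) (fun a => δ^[(i:ℕ)] (g a)) := by
    intro i
    refine AdoComp.GoodRep.mono ?_ (hiter (i:ℕ))
    have := i.isLt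
    omega
  have hbig := AdoComp.GoodRep.tsum (δ := δ) (k := m+n)
    (fun α : Fin (m+1) →₀ ℕ => MvPowerSeries.coeff α F) hF
    (fun α a => ∏ i : Fin (m+1), (δ^[(i:ℕ)] (g a)) ^ (α i))
    (fun α => AdoComp.GoodRep.finsetProd _ _ fun i _ =>
      AdoComp.GoodRep.pow (hcomp i) (α i))
  refine AdoComp.goodRep_isADO (hbig.congr fun a => ?_)
  rw [Function.comp_apply, hFe (g a)]
  rfl
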